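/- For any word w ∈ V* and any m, k ≥ 1, the language rHI*_{m,k}(w) obtained by applying the iterated m-bounded right k-hairpin incompletion to the singleton {w} is a regular language. -/

import Mathlib

open scoped Classical

namespace Hairpin

variable {V : Type}

/-- Reversed complement of a word under the involution `bar`. -/
def rc (bar : V → V) (w : List V) : List V := (w.map bar).reverse

/-- `w` admits a right hairpin decomposition `w = δγαβᾱ^R` with `|α| = k`, `|γ| ≤ m`. -/
def hasRightDecomp (bar : V → V) (m k : ℕ) (w : List V) : Prop :=
  ∃ δ γ α β : List V, w = δ ++ γ ++ α ++ β ++ rc bar α ∧ α.length = k ∧ γ.length ≤ m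

def hasLeftDecomp (bar : V → V) (m k : ℕ) (w : List V) : Prop :=
  ∃ α β γ δ : List V, w = α ++ β ++ rc bar α ++ γ ++ δ ∧ α.length = k ∧ γ.length ≤ m

/-- m-bounded right k-hairpin incompletion. -/
noncomputable def rHI (bar : V → V) (m k : ℕ) (w : List V) : Set (List V) :=
  if hasRightDecomp bar m k w then
    { v | ∃ δ γ α β : List V, w = δ ++ γ ++ α ++ β ++ rc bar α ∧ α.length = k ∧
          γ.length ≤ m ∧ v = w ++ rc bar γ }
  else {w}

/-- m-bounded left k-hairpin incompletion. -/
noncomputable def lHI (bar : V → V) (m k : ℕ) (w : List V) : Set (List V) :=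
  if hasLeftDecomp bar m k w then
    { v | ∃ α β γ δ : List V, w = α ++ β ++ rc bar α ++ γ ++ δ ∧ α.length = k ∧
          γ.length ≤ m ∧ v = rc bar γ ++ w }
  else {w}

/-- m-bounded k-hairpin incompletion. -/
noncomputable def HI (bar : V → V) (m k : ℕ) (w : List V) : Set (List V) :=
  rHI bar m k w ∪ lHI bar m k w

noncomputable def rHIn (bar : V → V) (m k : ℕ) (w : List V) : ℕ → Set (List V)
  | 0 => {w}
  | n + 1 => ⋃ v ∈ rHIn bar m k w n, rHI bar m k v

noncomputable def rHIstar (bar : V → V) (m k : ℕ) (w : List V) : Set (List V) :=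
  ⋃ n, rHIn bar m k w n

noncomputable def HIn (bar : V → V) (m k : ℕ) (w : List V) : ℕ → Set (List V)
  | 0 => {w}
  | n + 1 => ⋃ v ∈ HIn bar m k w n, HI bar m k v

noncomputable def HIstar (bar : V → V) (m k : ℕ) (w : List V) : Set (List V) :=
  ⋃ n, HIn bar m k w n

noncomputable def rHIstarL (bar : V → V) (m k : ℕ) (L : Set (List V)) : Set (List V) :=
  ⋃ w ∈ L, rHIstar bar m k w

noncomputable def HIL (bar : V → V) (m k : ℕ) (L : Set (List V)) : Set (List V) :=
  ⋃ w ∈ L, HI bar m k w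

noncomputable def HIstarL (bar : V → V) (m k : ℕ) (L : Set (List V)) : Set (List V) :=
  ⋃ w ∈ L, HIstar bar m k w

/-- The set `C_{m,k}(w)`. -/
def Cmk (bar : V → V) (m k : ℕ) (w : List V) : Set (List V × List V) :=
  { p | ∃ x y w₁ w₂ z : List V,
      x.length ≤ m ∧ y.length = k ∧ w = w₁ ++ (x ++ y) ++ w₂ ∧
      z.length ≤ k ∧ z <:+ w₂ ∧ z <+: rc bar y ∧ p = (x ++ y, z) }

/-- The suffix component of `D_{m,k}(w)`: all suffixes of `w` of length `i+k-1`, `0 ≤ i ≤ m`. -/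
def DmkSuf (m k : ℕ) (w : List V) : Set (List V) :=
  { s | ∃ i ≤ m, s.length = i + k - 1 ∧ s <:+ w }

noncomputable def Dmk (bar : V → V) (m k : ℕ) (w : List V) :
    Set (List V × List V) × Set (List V) :=
  (Cmk bar m k w, DmkSuf m k w)

/-- The set `C'_{m,k}(w)`. -/
def Cmk' (bar : V → V) (m k : ℕ) (w : List V) : Set (List V × List V) :=
  { p | ∃ x y w₁ w₂ z : List V,
      x.length ≤ m ∧ y.length = k ∧ w = w₁ ++ (y ++ x) ++ w₂ ∧
      z.length ≤ k ∧ z <+: w₁ ∧ z <:+ rc bar y ∧ p = (z, y ++ x) }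

/-- The prefix component of `D'_{m,k}(w)`. -/
def DmkPref (m k : ℕ) (w : List V) : Set (List V) :=
  { s | ∃ i ≤ m, s.length = i + k - 1 ∧ s <+: w }

noncomputable def Dmk' (bar : V → V) (m k : ℕ) (w : List V) :
    Set (List V × List V) × Set (List V) :=
  (Cmk' bar m k w, DmkPref m k w)

noncomputable def Emk (bar : V → V) (m k : ℕ) (w : List V) :=
  (Dmk bar m k w, Dmk' bar m k w)


/-- View a set of words as a `Language`. -/
def lang {V : Type} (L : Set (List V)) : Language V := L


section HairpinRegularityProof

variable {V : Type}

lemma length_rc (bar : V → V) (l : List V) : (rc bar l).length = l.length := by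
  simp [rc]

lemma rc_rc (bar : V → V) (hbar : ∀ a, bar (bar a) = a) (l : List V) :
    rc bar (rc bar l) = l := by
  simp only [rc, List.map_reverse, List.reverse_reverse, List.map_map]
  rw [show bar ∘ bar = id from funext hbar, List.map_id]

-- suffix of right part
lemma suffix_right {a b f : List V} (h : f <:+ a ++ b) (hl : f.length ≤ b.length) :
    f <:+ b := by
  obtain ⟨g, hg⟩ := h
  have hga : a.length ≤ g.length := by
    have := congrArg List.length hg
    simp only [List.length_append] at this; omega
  have : b = (a ++ b).drop a.length := by simp
  rw [this, ← hg, List.drop_append]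
  exact ⟨g.drop a.length, by rw [Nat.sub_eq_zero_of_le hga, List.drop_zero]⟩

-- common suffix extraction
lemma drop_sub_eq_of_suffix {z l : List V} (h : l <:+ z) {n : ℕ} (hn : n ≤ l.length) :
    z.drop (z.length - n) = l.drop (l.length - n) := by
  obtain ⟨c, rfl⟩ := h
  rw [List.length_append, show c.length + l.length - n = c.length + (l.length - n) by omega,
    List.drop_length_add_append]

/-- Core decomposition predicate (γ fixed). -/
def GoodG (bar : V → V) (k : ℕ) (u γ : List V) : Prop :=
  ∃ δ α β : List V, u = δ ++ γ ++ α ++ β ++ rc bar α ∧ α.length = k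

def alphaOf (bar : V → V) (k : ℕ) (u : List V) : List V :=
  rc bar (u.drop (u.length - k))

lemma good_iff (bar : V → V) (hbar : ∀ a, bar (bar a) = a) (k : ℕ) (u γ : List V) :
    GoodG bar k u γ ↔ ∃ e, e + k ≤ u.length ∧ (γ ++ alphaOf bar k u) <:+ u.take e := by
  constructor
  · rintro ⟨δ, α, β, hu, hα⟩
    have hlen : u.length = δ.length + γ.length + α.length + β.length + α.length := by
      subst hu; simp only [List.length_append, length_rc]
    have hsuffk : u.drop (u.length - k) = rc bar α := by
      have h1 : u = (δ ++ γ ++ α ++ β) ++ rc bar α := by simp [hu, List.append_assoc]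
      rw [h1, List.drop_left' (by simp only [List.length_append, length_rc]; omega)]
    have hαeq : alphaOf bar k u = α := by
      rw [alphaOf, hsuffk, rc_rc bar hbar]
    refine ⟨δ.length + γ.length + α.length, by omega, ?_⟩
    have h2 : u.take (δ.length + γ.length + α.length) = δ ++ (γ ++ α) := by
      have : u = (δ ++ (γ ++ α)) ++ (β ++ rc bar α) := by simp [hu, List.append_assoc]
      rw [this, List.take_left' (by simp; omega)]
    rw [hαeq, h2]
    exact ⟨δ, rfl⟩
  · rintro ⟨e, he, hsuf⟩
    obtain ⟨δ, hδ⟩ := hsuf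
    set α := alphaOf bar k u with hα
    have hk : k ≤ u.length := by omega
    have hαlen : α.length = k := by
      rw [hα, alphaOf, length_rc, List.length_drop]; omega
    have hrcα : rc bar α = u.drop (u.length - k) := by
      rw [hα, alphaOf, rc_rc bar hbar]
    refine ⟨δ, α, (u.drop e).take (u.length - e - k), ?_, hαlen⟩
    have hsplit : u = u.take e ++ u.drop e := (List.take_append_drop e u).symm
    have hdrop : u.drop e = (u.drop e).take (u.length - e - k) ++ u.drop (u.length - k) := by
      conv_lhs => rw [← List.take_append_drop (u.length - e - k) (u.drop e)]
      congr 1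
      rw [List.drop_drop, show e + (u.length - e - k) = u.length - k by omega]
    rw [hrcα]
    calc u = u.take e ++ u.drop e := hsplit
    _ = (δ ++ (γ ++ α)) ++ ((u.drop e).take (u.length - e - k) ++ u.drop (u.length - k)) := by
        rw [hδ, ← hdrop]
    _ = δ ++ γ ++ α ++ (u.drop e).take (u.length - e - k) ++ u.drop (u.length - k) := by
        simp [List.append_assoc]

def PhiOf (bar : V → V) (m k : ℕ) (u : List V) : Set (List V) :=
  {f | f.length ≤ m + k ∧ ∃ e, e + k ≤ u.length ∧ f <:+ u.take e}

def rhoOf (m k : ℕ) (u : List V) : List V := u.drop (u.length - (m + 2*k))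

def AOf (bar : V → V) (m k : ℕ) (u : List V) : Set (List V) × List V :=
  (PhiOf bar m k u, rhoOf m k u)

def updA (bar : V → V) (m k : ℕ) (s : Set (List V) × List V) (x : List V) :
    Set (List V) × List V :=
  (s.1 ∪ PhiOf bar m k (s.2 ++ x), rhoOf m k (s.2 ++ x))

def goodAb (bar : V → V) (k : ℕ) (s : Set (List V) × List V) (γ : List V) : Prop :=
  k ≤ s.2.length ∧ (γ ++ alphaOf bar k s.2) ∈ s.1

lemma length_rhoOf (m k : ℕ) (u : List V) :
    (rhoOf m k u).length = min (m + 2*k) u.length := by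
  simp [rhoOf]; omega

lemma rhoOf_suffix (m k : ℕ) (u : List V) : rhoOf m k u <:+ u := List.drop_suffix _ _

lemma rhoOf_eq_self {m k : ℕ} {u : List V} (h : u.length ≤ m + 2*k) : rhoOf m k u = u := by
  simp [rhoOf, Nat.sub_eq_zero_of_le h]

lemma rhoOf_append (m k : ℕ) (u x : List V) :
    rhoOf m k (u ++ x) = rhoOf m k (rhoOf m k u ++ x) := by
  by_cases h : u.length ≤ m + 2*k
  · rw [rhoOf_eq_self h]
  · push_neg at h
    have hsuf : rhoOf m k u ++ x <:+ u ++ x := by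
      obtain ⟨c, hc⟩ := rhoOf_suffix m k u
      exact ⟨c, by rw [← List.append_assoc, hc]⟩
    have hlen : m + 2*k ≤ (rhoOf m k u ++ x).length := by
      simp [List.length_append, length_rhoOf]; omega
    exact drop_sub_eq_of_suffix hsuf hlen

lemma alphaOf_rhoOf (bar : V → V) {m k : ℕ} (hk : k ≤ m + 2*k) (u : List V) :
    alphaOf bar k (rhoOf m k u) = alphaOf bar k u := by
  by_cases h : u.length ≤ m + 2*k
  · rw [rhoOf_eq_self h]
  · push_neg at h
    unfold alphaOf
    rw [drop_sub_eq_of_suffix (rhoOf_suffix m k u) (by rw [length_rhoOf]; omega)]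

lemma phiOf_append (bar : V → V) (m k : ℕ) (u x : List V) :
    PhiOf bar m k (u ++ x) = PhiOf bar m k u ∪ PhiOf bar m k (rhoOf m k u ++ x) := by
  ext f
  simp only [PhiOf, Set.mem_setOf_eq, Set.mem_union, List.length_append]
  constructor
  · rintro ⟨hf, e, he, hs⟩
    by_cases h1 : e + k ≤ u.length
    · left
      refine ⟨hf, e, h1, ?_⟩
      rwa [List.take_append_of_le_length (by omega)] at hs
    · push_neg at h1
      by_cases h2 : u.length ≤ m + 2*k
      · right
        refine ⟨hf, e, ?_, ?_⟩
        · rw [rhoOf_eq_self h2]; simpa using he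
        · rwa [rhoOf_eq_self h2]
      · push_neg at h2
        right
        set d := u.length - (m + 2*k) with hd
        have hud : u = u.take d ++ rhoOf m k u := (List.take_append_drop d u).symm
        have hcl : (u.take d).length = d := by
          rw [List.length_take]; omega
        have hkey : (u ++ x).take e = u.take d ++ (rhoOf m k u ++ x).take (e - d) := by
          conv_lhs => rw [hud, List.append_assoc]
          rw [List.take_append, List.take_of_length_le (by omega), hcl]
        rw [hkey] at hs
        have hrl : (rhoOf m k u).length = m + 2*k := by rw [length_rhoOf]; omega
        have hfr : f <:+ (rhoOf m k u ++ x).take (e - d) := by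
          refine suffix_right hs ?_
          rw [List.length_take, List.length_append, hrl]
          omega
        exact ⟨hf, e - d, by simp [List.length_append, hrl]; omega, hfr⟩
  · intro h
    rcases h with ⟨hf, e, he, hs⟩ | ⟨hf, e, he, hs⟩
    · refine ⟨hf, e, by omega, ?_⟩
      rwa [List.take_append_of_le_length (by omega)]
    · set d := u.length - (m + 2*k) with hd
      have hud : u = u.take d ++ rhoOf m k u := (List.take_append_drop d u).symm
      have hcl : (u.take d).length = d := by rw [List.length_take]; omega
      have hrl : (rhoOf m k u).length = min (m + 2*k) u.length := length_rhoOf m k u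
      refine ⟨hf, d + e, ?_, ?_⟩
      · rw [hrl] at he; omega
      · skip
        have hkey : (u ++ x).take (d + e) = u.take d ++ (rhoOf m k u ++ x).take e := by
          conv_lhs => rw [hud, List.append_assoc]
          rw [List.take_append, List.take_of_length_le (by omega), hcl,
            show d + e - d = e by omega]
        rw [hkey]
        exact hs.trans (List.suffix_append _ _)

lemma AOf_append (bar : V → V) (m k : ℕ) (u x : List V) :
    AOf bar m k (u ++ x) = updA bar m k (AOf bar m k u) x := by
  unfold AOf updA
  simp only
  rw [← phiOf_append, ← rhoOf_append]

lemma good_abs (bar : V → V) (hbar : ∀ a, bar (bar a) = a) (m k : ℕ) {γ : List V}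
    (hγ : γ.length ≤ m) (u : List V) :
    GoodG bar k u γ ↔ goodAb bar k (AOf bar m k u) γ := by
  rw [good_iff bar hbar]
  unfold goodAb AOf
  simp only
  rw [length_rhoOf, alphaOf_rhoOf bar (by omega)]
  unfold PhiOf
  simp only [Set.mem_setOf_eq]
  constructor
  · rintro ⟨e, he, hs⟩
    have hαl : (alphaOf bar k u).length = min k u.length := by
      rw [alphaOf, length_rc, List.length_drop]; omega
    exact ⟨by omega, ⟨by rw [List.length_append, hαl]; omega, e, he, hs⟩⟩
  · rintro ⟨-, -, e, he, hs⟩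
    exact ⟨e, he, hs⟩

def StepF (bar : V → V) (m k : ℕ) (u v : List V) : Prop :=
  ∃ δ γ α β : List V, u = δ ++ γ ++ α ++ β ++ rc bar α ∧ α.length = k ∧
    γ.length ≤ m ∧ v = u ++ rc bar γ

def StepNE (bar : V → V) (m k : ℕ) (u v : List V) : Prop :=
  ∃ γ, γ ≠ [] ∧ γ.length ≤ m ∧ GoodG bar k u γ ∧ v = u ++ rc bar γ

lemma rHI_eq (bar : V → V) (m k : ℕ) (u : List V) :
    rHI bar m k u = insert u {v | StepF bar m k u v} := by
  unfold rHI
  by_cases h : hasRightDecomp bar m k u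
  · rw [if_pos h]
    have hu : u ∈ {v | StepF bar m k u v} := by
      obtain ⟨δ, γ, α, β, hdec, hα, hγ⟩ := h
      refine ⟨δ ++ γ, [], α, β, ?_, hα, by simp, by simp [rc]⟩
      simp [hdec, List.append_assoc]
    rw [Set.insert_eq_self.mpr hu]
    rfl
  · rw [if_neg h]
    have : {v | StepF bar m k u v} = (∅ : Set (List V)) := by
      ext v; simp only [Set.mem_setOf_eq, Set.mem_empty_iff_false, iff_false]
      rintro ⟨δ, γ, α, β, hdec, hα, hγ, -⟩
      exact h ⟨δ, γ, α, β, hdec, hα, hγ⟩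
    rw [this]
    simp

lemma rHIstar_eq_rtg (bar : V → V) (m k : ℕ) (w : List V) :
    rHIstar bar m k w = {v | Relation.ReflTransGen (StepF bar m k) w v} := by
  apply Set.eq_of_subset_of_subset
  · rw [rHIstar]
    refine Set.iUnion_subset fun n => ?_
    induction n with
    | zero =>
      rintro v hv
      simp only [rHIn, Set.mem_singleton_iff] at hv
      exact hv ▸ Relation.ReflTransGen.refl
    | succ n ih =>
      rintro v hv
      simp only [rHIn, Set.mem_iUnion] at hv
      obtain ⟨u, hu, hvu⟩ := hv
      rw [rHI_eq] at hvu
      rcases hvu with rfl | hstep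
      · exact ih hu
      · exact Relation.ReflTransGen.tail (ih hu) hstep
  · rintro v hv
    simp only [Set.mem_setOf_eq] at hv
    have : ∃ n, v ∈ rHIn bar m k w n := by
      induction hv with
      | refl => exact ⟨0, rfl⟩
      | tail hab hbc ih =>
        obtain ⟨n, hn⟩ := ih
        refine ⟨n + 1, ?_⟩
        simp only [rHIn, Set.mem_iUnion]
        exact ⟨_, hn, by rw [rHI_eq]; exact Set.mem_insert_iff.mpr (Or.inr hbc)⟩
    obtain ⟨n, hn⟩ := this
    exact Set.mem_iUnion.mpr ⟨n, hn⟩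

lemma rtg_stepF_iff_stepNE (bar : V → V) (m k : ℕ) (w v : List V) :
    Relation.ReflTransGen (StepF bar m k) w v ↔
      Relation.ReflTransGen (StepNE bar m k) w v := by
  constructor
  · intro h
    induction h with
    | refl => exact Relation.ReflTransGen.refl
    | tail hab hbc ih =>
      obtain ⟨δ, γ, α, β, hdec, hα, hγ, hv⟩ := hbc
      by_cases hγnil : γ = []
      · subst hγnil
        simp only [rc, List.map_nil, List.reverse_nil, List.append_nil] at hv
        exact hv ▸ ih
      · exact Relation.ReflTransGen.tail ih ⟨γ, hγnil, hγ, ⟨δ, α, β, hdec, hα⟩, hv⟩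
  · intro h
    refine Relation.ReflTransGen.mono ?_ _ _ h
    rintro u v ⟨γ, -, hγ, ⟨δ, α, β, hdec, hα⟩, hv⟩
    exact ⟨δ, γ, α, β, hdec, hα, hγ, hv⟩

def Inv (m k : ℕ) (p : (Set (List V) × List V) × List V) : Prop :=
  (∀ f ∈ p.1.1, f.length ≤ m + k) ∧ p.1.2.length ≤ m + 2*k ∧ p.2.length ≤ m

/-- NFA state type. -/
def Stt (V : Type) (m k : ℕ) (w : List V) : Type :=
  Fin (w.length + 1) ⊕ {p : (Set (List V) × List V) × List V // Inv m k p}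

instance finite_bounded_lists [Finite V] (n : ℕ) : Finite {l : List V // l.length ≤ n} :=
  (List.finite_length_le V n).to_subtype

instance stt_finite [Finite V] (m k : ℕ) (w : List V) : Finite (Stt V m k w) := by
  have : Finite {p : (Set (List V) × List V) × List V // Inv m k p} := by
    set F : {p : (Set (List V) × List V) × List V // Inv m k p} →
      ({f : List V // f.length ≤ m + k} → Prop) ×
        {r : List V // r.length ≤ m + 2*k} × {b : List V // b.length ≤ m} :=
      fun p => (fun f => (f : List V) ∈ p.1.1.1, ⟨p.1.1.2, p.2.2.1⟩, ⟨p.1.2, p.2.2.2⟩)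
      with hF
    have hinj : Function.Injective F := by
      rintro ⟨⟨⟨P, r⟩, b⟩, hp⟩ ⟨⟨⟨P', r'⟩, b'⟩, hp'⟩ h
      simp only [hF, Prod.mk.injEq, Subtype.mk.injEq] at h
      obtain ⟨h1, h2, h3⟩ := h
      refine Subtype.ext ?_
      simp only [Prod.mk.injEq]
      refine ⟨⟨?_, h2⟩, h3⟩
      ext f
      by_cases hf : f.length ≤ m + k
      · exact iff_of_eq (congrFun h1 ⟨f, hf⟩)
      · constructor
        · intro hmem; exact absurd (hp.1 f hmem) hf
        · intro hmem; exact absurd (hp'.1 f hmem) hf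
    exact Finite.of_injective F hinj
  unfold Stt
  infer_instance

variable (bar : V → V) (m k : ℕ) (w : List V)

/-- block-start transitions from abstract state `s`. -/
def bStart (s : Set (List V) × List V) (a : V) : Set (Stt V m k w) :=
  {q | ∃ γ rest, γ ≠ [] ∧ γ.length ≤ m ∧ goodAb bar k s γ ∧ rc bar γ = a :: rest ∧
      ∃ h, q = Sum.inr ⟨(updA bar m k s (rc bar γ), rest), h⟩}

def nfaStep : Stt V m k w → V → Set (Stt V m k w)
  | Sum.inl i, a =>
      {q | (∃ h : (i : ℕ) < w.length, w.get ⟨i, h⟩ = a ∧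
              q = Sum.inl ⟨(i : ℕ) + 1, by omega⟩) ∨
           ((i : ℕ) = w.length ∧ q ∈ bStart bar m k w (AOf bar m k w) a)}
  | Sum.inr p, a =>
      {q | (p.1.2 = [] ∧ q ∈ bStart bar m k w p.1.1 a) ∨
           (∃ rest, p.1.2 = a :: rest ∧ ∃ h, q = Sum.inr ⟨(p.1.1, rest), h⟩)}

def nfa : NFA V (Stt V m k w) where
  step := nfaStep bar m k w
  start := {Sum.inl 0}
  accept := {q | q = Sum.inl (Fin.last w.length) ∨
    ∃ s h, q = Sum.inr ⟨(s, ([] : List V)), h⟩}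

/-- the intended set of states after reading `x`. -/
def ExactS (x : List V) : Set (Stt V m k w) :=
  {q | (∃ i : Fin (w.length + 1), x = w.take i ∧ q = Sum.inl i) ∨
       (∃ u γ y b : List V, Relation.ReflTransGen (StepNE bar m k) w u ∧
          γ ≠ [] ∧ γ.length ≤ m ∧ GoodG bar k u γ ∧ y ≠ [] ∧ rc bar γ = y ++ b ∧
          x = u ++ y ∧
          ∃ h, q = Sum.inr ⟨(AOf bar m k (u ++ rc bar γ), b), h⟩)}

lemma inv_AOf (u b : List V) (hb : b.length ≤ m) : Inv m k ((AOf bar m k u, b)) := by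
  refine ⟨fun f hf => hf.1, ?_, hb⟩
  simp only [AOf, length_rhoOf]
  omega

lemma take_succ_get {l : List V} {n : ℕ} (h : n < l.length) :
    l.take (n + 1) = l.take n ++ [l.get ⟨n, h⟩] := by
  rw [← List.take_concat_get h, List.concat_eq_append]
  rfl

lemma inr_eq_of_val {v1 v2 : (Set (List V) × List V) × List V} (h : Inv m k v1)
    (hv : v2 = v1) : ∃ h', (Sum.inr ⟨v1, h⟩ : Stt V m k w) = Sum.inr ⟨v2, h'⟩ := by
  subst hv; exact ⟨h, rfl⟩

lemma eval_eq_exact (hbar : ∀ a, bar (bar a) = a) (x : List V) :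
    (nfa bar m k w).eval x = ExactS bar m k w x := by
  induction x using List.reverseRecOn with
  | nil =>
    rw [NFA.eval_nil]
    ext q
    simp only [nfa, ExactS, Set.mem_singleton_iff, Set.mem_setOf_eq]
    constructor
    · rintro rfl
      exact Or.inl ⟨0, by simp, rfl⟩
    · rintro (⟨i, hx, rfl⟩ | ⟨u, γ, y, b, hu, hγ, hγm, hg, hy, hrc, hx, h, rfl⟩)
      · have h0 : (i : ℕ) = 0 := by
          rcases List.take_eq_nil_iff.mp hx.symm with h0 | h0
          · exact h0
          · have h1 : w.length = 0 := by rw [h0]; rfl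
            have := i.isLt
            omega
        rw [show i = (0 : Fin (w.length + 1)) from Fin.ext (by simpa using h0)]
        exact Set.mem_singleton _
      · exact absurd hx.symm (by simp [hy])
  | append_singleton x a ih =>
    rw [NFA.eval_append_singleton, ih]
    ext q
    rw [NFA.mem_stepSet]
    constructor
    · rintro ⟨p, hp, hstep⟩
      rcases hp with ⟨i, hx, rfl⟩ | ⟨u, γ, y, b, hu, hγ, hγm, hg, hy, hrc, hx, h, rfl⟩
      · -- p = inl i
        simp only [nfa, nfaStep, Set.mem_setOf_eq] at hstep
        rcases hstep with ⟨hlt, hget, rfl⟩ | ⟨hieq, hb⟩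
        · refine Or.inl ⟨⟨(i : ℕ) + 1, by omega⟩, ?_, rfl⟩
          rw [hx]
          rw [show ((⟨(i : ℕ) + 1, by omega⟩ : Fin (w.length + 1)) : ℕ) = (i : ℕ) + 1 from rfl,
            take_succ_get hlt, hget]
        · -- i = |w| : block start from w
          have hxw : x = w := by rw [hx, hieq, List.take_length]
          obtain ⟨γ, rest, hγn, hγm, hgood, hrcγ, hinv, rfl⟩ := hb
          refine Or.inr ⟨w, γ, [a], rest, Relation.ReflTransGen.refl, hγn, hγm,
            (good_abs bar hbar m k hγm w).mpr hgood, by simp, by simpa using hrcγ,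
            by rw [hxw], ?_⟩
          rw [AOf_append]
          exact ⟨hinv, rfl⟩
      · -- p = inr ⟨(AOf (u ++ rc γ), b), h⟩
        simp only [nfa, nfaStep, Set.mem_setOf_eq] at hstep
        rcases hstep with ⟨hbnil, hbs⟩ | ⟨rest, hbeq, hinv', rfl⟩
        · -- pending empty: block start from u' = u ++ rc γ
          have hyrc : rc bar γ = y := by rw [hrc, hbnil, List.append_nil]
          have hu' : Relation.ReflTransGen (StepNE bar m k) w (u ++ rc bar γ) :=
            Relation.ReflTransGen.tail hu ⟨γ, hγ, hγm, hg, rfl⟩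
          have hxu : x = u ++ rc bar γ := by rw [hx, hyrc]
          obtain ⟨γ', rest, hγn', hγm', hgood', hrcγ', hinv, rfl⟩ := hbs
          refine Or.inr ⟨u ++ rc bar γ, γ', [a], rest, hu', hγn', hγm',
            (good_abs bar hbar m k hγm' _).mpr hgood', by simp, by simpa using hrcγ',
            by rw [hxu], ?_⟩
          rw [AOf_append]
          exact ⟨hinv, rfl⟩
        · -- consume a letter of pending block
          refine Or.inr ⟨u, γ, y ++ [a], rest, hu, hγ, hγm, hg, by simp, ?_,
            by rw [hx, List.append_assoc], hinv', rfl⟩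
          rw [hrc, hbeq, List.append_assoc]
          rfl
    · intro hq
      rcases hq with ⟨i, hxa, rfl⟩ | ⟨u, γ, y, b, hu, hγ, hγm, hg, hy, hrc, hxa, h, rfl⟩
      · -- prefix branch
        have hi0 : (i : ℕ) ≠ 0 := by
          intro h0
          rw [h0] at hxa
          simp at hxa
        have hlen : x.length + 1 = min (i : ℕ) w.length := by
          have := congrArg List.length hxa
          simpa using this
        have hiw : (i : ℕ) ≤ w.length := by omega
        have hn : (i : ℕ) - 1 < w.length := by omega
        have htake : w.take (i : ℕ) = w.take ((i : ℕ) - 1) ++ [w.get ⟨(i : ℕ) - 1, hn⟩] := by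
          conv_lhs => rw [show (i : ℕ) = ((i : ℕ) - 1) + 1 by omega]
          exact take_succ_get hn
        rw [htake] at hxa
        obtain ⟨hx, ha⟩ := List.append_inj' hxa rfl
        refine ⟨Sum.inl ⟨(i : ℕ) - 1, by omega⟩, Or.inl ⟨⟨(i : ℕ) - 1, by omega⟩, hx, rfl⟩, ?_⟩
        simp only [nfa, nfaStep, Set.mem_setOf_eq]
        refine Or.inl ⟨hn, by simpa using ha.symm, ?_⟩
        exact congrArg Sum.inl (Fin.ext (by simp; omega))
      · -- block branch
        rcases List.eq_nil_or_concat y with rfl | ⟨y', c, rfl⟩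
        · exact absurd rfl hy
        · simp only [List.concat_eq_append] at hy hrc hxa
          rw [show u ++ (y' ++ [c]) = (u ++ y') ++ [c] by rw [List.append_assoc]] at hxa
          obtain ⟨hx, hac⟩ := List.append_inj' hxa rfl
          have hac' : a = c := by simpa using hac
          rcases eq_or_ne y' [] with rfl | hy'
          · -- first letter of the block
            simp only [List.append_nil] at hx
            have hrc' : rc bar γ = a :: b := by rw [hrc, hac']; rfl
            rcases (Relation.ReflTransGen.cases_tail hu) with heq | ⟨u₀, hu₀, hstep₀⟩
            · -- u = w
              refine ⟨Sum.inl (Fin.last w.length), Or.inl ⟨Fin.last w.length,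
                by rw [hx, heq]; simp [Fin.last], rfl⟩, ?_⟩
              simp only [nfa, nfaStep, Set.mem_setOf_eq]
              refine Or.inr ⟨by first | trivial | simp [Fin.last], ?_⟩
              refine ⟨γ, b, hγ, hγm, (good_abs bar hbar m k hγm w).mp
                (by rw [← heq]; exact hg), hrc', ?_⟩
              refine inr_eq_of_val m k w h ?_
              rw [← AOf_append bar m k w (rc bar γ), heq]
            · obtain ⟨γ₀, hγ₀, hγ₀m, hg₀, rfl⟩ := hstep₀
              have hrcγ₀ : rc bar γ₀ ≠ [] := by
                intro hnil
                apply hγ₀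
                have hlr := length_rc bar γ₀
                rw [hnil] at hlr
                exact List.length_eq_zero_iff.mp hlr.symm
              refine ⟨Sum.inr ⟨(AOf bar m k (u₀ ++ rc bar γ₀), []),
                  inv_AOf bar m k _ _ (by simp)⟩, ?_, ?_⟩
              · exact Or.inr ⟨u₀, γ₀, rc bar γ₀, [], hu₀, hγ₀, hγ₀m, hg₀, hrcγ₀,
                  (List.append_nil _).symm, hx, inv_AOf bar m k _ _ (by simp), rfl⟩
              · simp only [nfa, nfaStep, Set.mem_setOf_eq]
                refine Or.inl ⟨by first | trivial | rfl, ?_⟩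
                refine ⟨γ, b, hγ, hγm, (good_abs bar hbar m k hγm _).mp hg, hrc', ?_⟩
                refine inr_eq_of_val m k w h ?_
                rw [← AOf_append bar m k (u₀ ++ rc bar γ₀) (rc bar γ)]
          · -- middle of a block
            have hinv' : Inv m k ((AOf bar m k (u ++ rc bar γ), c :: b)) := by
              refine inv_AOf bar m k _ _ ?_
              have h1 : (rc bar γ).length = γ.length := length_rc bar γ
              rw [hrc] at h1
              simp only [List.length_append, List.length_cons, List.length_singleton] at h1
              have h2 : y'.length ≠ 0 := by simpa using hy'
              simp only [List.length_cons]
              omega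
            refine ⟨Sum.inr ⟨(AOf bar m k (u ++ rc bar γ), c :: b), hinv'⟩,
              Or.inr ⟨u, γ, y', c :: b, hu, hγ, hγm, hg, hy', ?_, hx, hinv', rfl⟩, ?_⟩
            · rw [hrc, List.append_assoc]
              rfl
            · simp only [nfa, nfaStep, Set.mem_setOf_eq]
              exact Or.inr ⟨b, by rw [hac'], h, rfl⟩

lemma accepts_eq (hbar : ∀ a, bar (bar a) = a) :
    (nfa bar m k w).accepts = {v | Relation.ReflTransGen (StepNE bar m k) w v} := by
  ext x
  rw [NFA.mem_accepts]
  constructor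
  · rintro ⟨q, hacc, hball⟩
    rw [show (nfa bar m k w).evalFrom (nfa bar m k w).start x = (nfa bar m k w).eval x from rfl,
      eval_eq_exact bar m k w hbar] at hball
    simp only [nfa, Set.mem_setOf_eq] at hacc
    rcases hacc with rfl | ⟨s, hinv, rfl⟩
    · rcases hball with ⟨i, hx, hq⟩ | ⟨u, γ, y, b, hu, hγ, hγm, hg, hy, hrc, hx, h', hq⟩
      · have : i = Fin.last w.length := by
          have := Sum.inl.inj hq.symm
          exact this.symm ▸ rfl
        rw [this] at hx
        simp only [Fin.val_last, List.take_length] at hx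
        exact hx ▸ Relation.ReflTransGen.refl
      · exact absurd hq (by simp)
    · rcases hball with ⟨i, hx, hq⟩ | ⟨u, γ, y, b, hu, hγ, hγm, hg, hy, hrc, hx, h', hq⟩
      · exact absurd hq (by simp)
      · have hval := Subtype.ext_iff.mp (Sum.inr.inj hq)
        have hb : b = [] := (congrArg Prod.snd hval).symm
        subst hb
        rw [List.append_nil] at hrc
        rw [hx, ← hrc]
        exact Relation.ReflTransGen.tail hu ⟨γ, hγ, hγm, hg, rfl⟩
  · intro hx
    rcases Relation.ReflTransGen.cases_tail hx with heq | ⟨u, hu, hstep⟩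
    · refine ⟨Sum.inl (Fin.last w.length), Or.inl rfl, ?_⟩
      rw [show (nfa bar m k w).evalFrom (nfa bar m k w).start x = (nfa bar m k w).eval x from rfl,
        eval_eq_exact bar m k w hbar]
      exact Or.inl ⟨Fin.last w.length, by rw [heq]; simp [Fin.last], rfl⟩
    · obtain ⟨γ, hγ, hγm, hg, rfl⟩ := hstep
      have hrcγ : rc bar γ ≠ [] := by
        intro hnil
        apply hγ
        have hlr := length_rc bar γ
        rw [hnil] at hlr
        exact List.length_eq_zero_iff.mp hlr.symm
      refine ⟨Sum.inr ⟨(AOf bar m k (u ++ rc bar γ), []), inv_AOf bar m k _ _ (by simp)⟩,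
        Or.inr ⟨_, _, rfl⟩, ?_⟩
      rw [show (nfa bar m k w).evalFrom (nfa bar m k w).start (u ++ rc bar γ)
          = (nfa bar m k w).eval (u ++ rc bar γ) from rfl,
        eval_eq_exact bar m k w hbar]
      exact Or.inr ⟨u, γ, rc bar γ, [], hu, hγ, hγm, hg, hrcγ, (List.append_nil _).symm, rfl,
        inv_AOf bar m k _ _ (by simp), rfl⟩

theorem rHIstar_isRegular' [Fintype V] (hbar : ∀ a, bar (bar a) = a)
    (hm : 1 ≤ m) (hk : 1 ≤ k) :
    Language.IsRegular (lang (rHIstar bar m k w)) := by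
  have hL : lang (rHIstar bar m k w) = (nfa bar m k w).accepts := by
    rw [accepts_eq bar m k w hbar]
    show (rHIstar bar m k w : Set (List V)) = _
    rw [rHIstar_eq_rtg]
    ext v
    exact rtg_stepF_iff_stepNE bar m k w v
  haveI : Fintype (Stt V m k w) := Fintype.ofFinite _
  exact ⟨Set (Stt V m k w), inferInstance, (nfa bar m k w).toDFA,
    by rw [NFA.toDFA_correct, ← hL]⟩

end HairpinRegularityProof

variable {V : Type} [Fintype V]

theorem rHIstar_isRegular (bar : V → V) (hbar : ∀ a, bar (bar a) = a) (m k : ℕ) (hm : 1 ≤ m) (hk : 1 ≤ k) (w : List V) :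
    Language.IsRegular (lang (rHIstar bar m k w)) :=
  rHIstar_isRegular' bar m k w hbar hm hk

end Hairpin
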